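/- Let X = X₁ + X₂ where X₁ ~ Bernoulli(p) and X₂ ~ N(0, σ²) are independent. Then |φ_X(d)|² = (p² + (1−p)² + 2p(1−p)cos(d)) · exp(−σ²d²), and X is reasonable with respect to cos if and only if σ²d(p² + (1−p)² + 2p(1−p)cos d) + p(1−p) sin d ≥ 0 for all d ≥ 0. -/

import Mathlib

open MeasureTheory ProbabilityTheory Set

/-- Bounded complex exponential of imaginary argument is integrable. -/
lemma aux_integrable_cexp {Ω : Type*} [MeasurableSpace Ω] (P : Measure Ω)
    [IsProbabilityMeasure P] {Y : Ω → ℝ} (hY : Measurable Y) :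
    Integrable (fun ω => Complex.exp (Complex.I * (Y ω : ℂ))) P := by
  apply (integrable_const (1 : ℝ)).mono'
  · exact (Complex.measurable_exp.comp
      (measurable_const.mul (Complex.measurable_ofReal.comp hY))).aestronglyMeasurable
  · refine Filter.Eventually.of_forall fun ω => ?_
    simp [Complex.norm_exp]

/-- Product rule for complex-valued independent integrable functions. -/
lemma aux_indep_integral_mul {Ω : Type*} [MeasurableSpace Ω] {P : Measure Ω}
    {F G : Ω → ℂ} (h : IndepFun F G P) (hF : Integrable F P) (hG : Integrable G P)
    (hFG : Integrable (fun ω => F ω * G ω) P) :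
    ∫ ω, F ω * G ω ∂P = (∫ ω, F ω ∂P) * (∫ ω, G ω ∂P) := by
  have hrr := (h.comp Complex.measurable_re Complex.measurable_re)
  have hri := (h.comp Complex.measurable_re Complex.measurable_im)
  have hir := (h.comp Complex.measurable_im Complex.measurable_re)
  have hii := (h.comp Complex.measurable_im Complex.measurable_im)
  have hFr : Integrable (fun ω => (F ω).re) P := hF.re
  have hFi : Integrable (fun ω => (F ω).im) P := hF.im
  have hGr : Integrable (fun ω => (G ω).re) P := hG.re
  have hGi : Integrable (fun ω => (G ω).im) P := hG.im
  have irr : Integrable (fun ω => (F ω).re * (G ω).re) P := hrr.integrable_mul hFr hGr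
  have iri : Integrable (fun ω => (F ω).re * (G ω).im) P := hri.integrable_mul hFr hGi
  have iir : Integrable (fun ω => (F ω).im * (G ω).re) P := hir.integrable_mul hFi hGr
  have iii : Integrable (fun ω => (F ω).im * (G ω).im) P := hii.integrable_mul hFi hGi
  have err : (∫ ω, (F ω).re * (G ω).re ∂P) = (∫ ω, (F ω).re ∂P) * ∫ ω, (G ω).re ∂P :=
    hrr.integral_fun_mul_eq_mul_integral hFr.aestronglyMeasurable hGr.aestronglyMeasurable
  have eri : (∫ ω, (F ω).re * (G ω).im ∂P) = (∫ ω, (F ω).re ∂P) * ∫ ω, (G ω).im ∂P :=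
    hri.integral_fun_mul_eq_mul_integral hFr.aestronglyMeasurable hGi.aestronglyMeasurable
  have eir : (∫ ω, (F ω).im * (G ω).re ∂P) = (∫ ω, (F ω).im ∂P) * ∫ ω, (G ω).re ∂P :=
    hir.integral_fun_mul_eq_mul_integral hFi.aestronglyMeasurable hGr.aestronglyMeasurable
  have eii : (∫ ω, (F ω).im * (G ω).im ∂P) = (∫ ω, (F ω).im ∂P) * ∫ ω, (G ω).im ∂P :=
    hii.integral_fun_mul_eq_mul_integral hFi.aestronglyMeasurable hGi.aestronglyMeasurable
  have hre : ∀ {f : Ω → ℂ} (hf : Integrable f P), (∫ ω, f ω ∂P).re = ∫ ω, (f ω).re ∂P := by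
    intro f hf
    rw [← RCLike.re_eq_complex_re, ← integral_re hf]
  have him : ∀ {f : Ω → ℂ} (hf : Integrable f P), (∫ ω, f ω ∂P).im = ∫ ω, (f ω).im ∂P := by
    intro f hf
    rw [← RCLike.im_eq_complex_im, ← integral_im hf]
  apply Complex.ext
  · rw [hre hFG, Complex.mul_re, hre hF, hre hG, him hF, him hG]
    calc ∫ ω, (F ω * G ω).re ∂P
        = ∫ ω, ((F ω).re * (G ω).re - (F ω).im * (G ω).im) ∂P := by
          simp [Complex.mul_re]
      _ = _ := by rw [integral_sub irr iii, err, eii]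
  · rw [him hFG, Complex.mul_im, hre hF, hre hG, him hF, him hG]
    calc ∫ ω, (F ω * G ω).im ∂P
        = ∫ ω, ((F ω).re * (G ω).im + (F ω).im * (G ω).re) ∂P := by
          simp [Complex.mul_im]
      _ = _ := by rw [integral_add iri iir, eri, eir]

/-- If a function is antitone on `Ioi 0` and differentiable at `d > 0`, derivative nonpositive. -/
lemma aux_antitoneOn_deriv_nonpos {g : ℝ → ℝ} {g' d : ℝ} (h : AntitoneOn g (Ioi 0))
    (hd : 0 < d) (hg : HasDerivAt g g' d) : g' ≤ 0 := by
  have ht : Filter.Tendsto (slope g d) (nhdsWithin d (Ioi d)) (nhds g') :=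
    (hasDerivAt_iff_tendsto_slope.mp hg).mono_left
      (nhdsWithin_mono d (fun x hx => ne_of_gt hx))
  refine le_of_tendsto ht ?_
  filter_upwards [self_mem_nhdsWithin] with x hx
  have hxd : d < x := hx
  have hgx : g x ≤ g d := h (mem_Ioi.mpr hd) (mem_Ioi.mpr (hd.trans hxd)) hxd.le
  rw [slope_def_field]
  apply div_nonpos_of_nonpos_of_nonneg <;> linarith

theorem stmt11 {Ω : Type*} [MeasurableSpace Ω] (P : Measure Ω) [IsProbabilityMeasure P]
    (X₁ X₂ : Ω → ℝ) (hX₁ : Measurable X₁) (hX₂ : Measurable X₂)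
    (hindep : IndepFun X₁ X₂ P)
    (p : ℝ) (hp0 : 0 ≤ p) (hp1 : p ≤ 1)
    (hBer : P.map X₁ = ENNReal.ofReal p • Measure.dirac (1 : ℝ) +
      ENNReal.ofReal (1 - p) • Measure.dirac (0 : ℝ))
    (σ : NNReal) (hσ : 0 < σ)
    (hGauss : P.map X₂ = gaussianReal 0 (σ ^ 2))
    (X : Ω → ℝ) (hXdef : X = X₁ + X₂)
    (φ : ℝ → ℂ) (hφ : ∀ t : ℝ, φ t = ∫ ω, Complex.exp (Complex.I * (t * X ω)) ∂P) :
    (∀ d : ℝ, ‖φ d‖ ^ 2 =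
        (p ^ 2 + (1 - p) ^ 2 + 2 * p * (1 - p) * Real.cos d) *
          Real.exp (-(σ : ℝ) ^ 2 * d ^ 2)) ∧
    (AntitoneOn (fun d : ℝ => ⨆ a : ℝ, ∫ ω, Real.cos (a + d * X ω) ∂P) (Ioi 0) ↔
      ∀ d : ℝ, 0 ≤ d →
        0 ≤ (σ : ℝ) ^ 2 * d * (p ^ 2 + (1 - p) ^ 2 + 2 * p * (1 - p) * Real.cos d) +
          p * (1 - p) * Real.sin d) := by
  have hX : Measurable X := by rw [hXdef]; exact hX₁.add hX₂
  set v : ℝ := (σ : ℝ) ^ 2 with hvdef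
  have hv0 : 0 < v := by positivity
  -- measurability of x ↦ exp(I t x)
  have hmeas : ∀ t : ℝ, Measurable (fun x : ℝ => Complex.exp (Complex.I * ((t : ℂ) * (x : ℂ)))) :=
    fun t => Complex.measurable_exp.comp
      (measurable_const.mul (measurable_const.mul Complex.measurable_ofReal))
  -- Bernoulli characteristic function
  have hφ₁ : ∀ t : ℝ, (∫ ω, Complex.exp (Complex.I * ((t : ℂ) * (X₁ ω : ℂ))) ∂P)
      = p * Complex.exp (Complex.I * t) + (1 - p) := by
    intro t
    rw [← integral_map hX₁.aemeasurable (hmeas t).aestronglyMeasurable, hBer]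
    have h1 : IsFiniteMeasure (ENNReal.ofReal p • Measure.dirac (1 : ℝ)) := by
      constructor; simp [ENNReal.mul_lt_top, ENNReal.ofReal_lt_top]
    have h2 : IsFiniteMeasure (ENNReal.ofReal (1 - p) • Measure.dirac (0 : ℝ)) := by
      constructor; simp [ENNReal.mul_lt_top, ENNReal.ofReal_lt_top]
    have hint : ∀ (μ : Measure ℝ) (_ : IsFiniteMeasure μ),
        Integrable (fun x : ℝ => Complex.exp (Complex.I * ((t : ℂ) * (x : ℂ)))) μ := by
      intro μ hμ
      apply (integrable_const (1 : ℝ)).mono' (hmeas t).aestronglyMeasurable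
      refine Filter.Eventually.of_forall fun x => ?_
      simp [Complex.norm_exp]
    rw [integral_add_measure (hint _ h1) (hint _ h2), integral_smul_measure,
      integral_smul_measure, integral_dirac, integral_dirac,
      ENNReal.toReal_ofReal hp0, ENNReal.toReal_ofReal (by linarith : (0:ℝ) ≤ 1 - p)]
    push_cast
    simp [Complex.real_smul]
  -- Gaussian characteristic function
  have hφ₂ : ∀ t : ℝ, (∫ ω, Complex.exp (Complex.I * ((t : ℂ) * (X₂ ω : ℂ))) ∂P)
      = ((Real.exp (-(v * t ^ 2 / 2)) : ℝ) : ℂ) := by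
    intro t
    rw [← integral_map hX₂.aemeasurable (hmeas t).aestronglyMeasurable, hGauss]
    have hσ2 : (σ ^ 2 : NNReal) ≠ 0 := by positivity
    rw [gaussianReal_of_var_ne_zero 0 hσ2]
    have hd : (volume.withDensity (gaussianPDF 0 (σ ^ 2)))
        = volume.withDensity (fun x => ((Real.toNNReal (gaussianPDFReal 0 (σ ^ 2) x) : NNReal) : ENNReal)) := rfl
    rw [hd, integral_withDensity_eq_integral_smul
      (f := fun x => Real.toNNReal (gaussianPDFReal 0 (σ ^ 2) x))
      (by exact measurable_real_toNNReal.comp (measurable_gaussianPDFReal 0 (σ ^ 2)))]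
    have hvv : ((σ ^ 2 : NNReal) : ℝ) = v := by push_cast [hvdef]; ring
    have hpt : ∀ x : ℝ, (Real.toNNReal (gaussianPDFReal 0 (σ ^ 2) x))
          • Complex.exp (Complex.I * ((t : ℂ) * (x : ℂ)))
        = ((Real.sqrt (2 * Real.pi * v))⁻¹ : ℂ)
          * Complex.exp ((-(1 / (2 * v)) : ℂ) * x ^ 2 + (Complex.I * t) * x + 0) := by
      intro x
      rw [NNReal.smul_def, Real.coe_toNNReal _ (gaussianPDFReal_nonneg 0 (σ ^ 2) x)]
      rw [gaussianPDFReal, hvv]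
      rw [Complex.real_smul]
      push_cast
      rw [mul_assoc, ← Complex.exp_add]
      congr 1
      have : (v : ℂ) ≠ 0 := by
        simp only [ne_eq, Complex.ofReal_eq_zero]; exact ne_of_gt hv0
      field_simp
      ring
    simp_rw [hpt]
    have hbre : (-(1 / (2 * (v:ℂ)))).re < 0 := by
      rw [show (-(1 / (2 * (v:ℂ)))) = ((-(1/(2*v)) : ℝ) : ℂ) by push_cast; ring,
        Complex.ofReal_re]
      have : 0 < 1/(2*v) := by positivity
      linarith
    rw [integral_const_mul, integral_cexp_quadratic hbre]
    have h2πv : (Real.pi / -(-(1 / (2 * (v:ℂ))))) = ((2 * Real.pi * v : ℝ) : ℂ) := by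
      have : (v : ℂ) ≠ 0 := by
        simp only [ne_eq, Complex.ofReal_eq_zero]; exact ne_of_gt hv0
      push_cast
      field_simp
    rw [h2πv]
    have h2πv0 : (0:ℝ) ≤ 2 * Real.pi * v := by positivity
    have hcpow : ((2 * Real.pi * v : ℝ) : ℂ) ^ (1 / 2 : ℂ)
        = ((Real.sqrt (2 * Real.pi * v) : ℝ) : ℂ) := by
      rw [show ((1:ℂ)/2) = ((1/2 : ℝ) : ℂ) by norm_num,
        ← Complex.ofReal_cpow h2πv0, Real.rpow_def_of_pos (by positivity)]
      rw [Real.sqrt_eq_rpow, Real.rpow_def_of_pos (by positivity)]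
    rw [hcpow]
    have hexp : (Complex.I * (t:ℂ)) ^ 2 / (4 * -(1 / (2 * (v:ℂ)))) = ((v * t ^ 2 / 2 : ℝ) : ℂ) := by
      have hvne : (v : ℂ) ≠ 0 := by
        simp only [ne_eq, Complex.ofReal_eq_zero]; exact ne_of_gt hv0
      push_cast
      rw [mul_pow, Complex.I_sq]
      field_simp
      ring
    rw [zero_sub, hexp]
    rw [← mul_assoc, ← Complex.ofReal_inv, ← Complex.ofReal_mul,
      inv_mul_cancel₀ (ne_of_gt (Real.sqrt_pos.mpr (by positivity))), Complex.ofReal_one, one_mul]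
    rw [← Complex.ofReal_neg, ← Complex.ofReal_exp]
  -- product formula
  have hφval : ∀ t : ℝ, φ t = (p * Complex.exp (Complex.I * t) + (1 - p))
      * ((Real.exp (-(v * t ^ 2 / 2)) : ℝ) : ℂ) := by
    intro t
    rw [hφ t, ← hφ₁ t, ← hφ₂ t]
    have hsplit : ∀ ω, Complex.exp (Complex.I * ((t:ℂ) * (X ω : ℂ)))
        = Complex.exp (Complex.I * ((t:ℂ) * (X₁ ω : ℂ)))
          * Complex.exp (Complex.I * ((t:ℂ) * (X₂ ω : ℂ))) := by
      intro ω
      rw [← Complex.exp_add, hXdef]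
      push_cast [Pi.add_apply]
      ring_nf
    simp_rw [hsplit]
    have hF : Integrable (fun ω => Complex.exp (Complex.I * ((t:ℂ) * (X₁ ω : ℂ)))) P := by
      have := aux_integrable_cexp P (Y := fun ω => t * X₁ ω) (measurable_const.mul hX₁)
      simpa using this
    have hG : Integrable (fun ω => Complex.exp (Complex.I * ((t:ℂ) * (X₂ ω : ℂ)))) P := by
      have := aux_integrable_cexp P (Y := fun ω => t * X₂ ω) (measurable_const.mul hX₂)
      simpa using this
    have hFG : Integrable (fun ω => Complex.exp (Complex.I * ((t:ℂ) * (X₁ ω : ℂ)))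
        * Complex.exp (Complex.I * ((t:ℂ) * (X₂ ω : ℂ)))) P := by
      have := aux_integrable_cexp P (Y := fun ω => t * X₁ ω + t * X₂ ω)
        ((measurable_const.mul hX₁).add (measurable_const.mul hX₂))
      apply this.congr
      refine Filter.Eventually.of_forall fun ω => ?_
      beta_reduce
      rw [← Complex.exp_add]
      push_cast
      ring_nf
    exact aux_indep_integral_mul (hindep.comp (hmeas t) (hmeas t)) hF hG hFG
  -- |φ d|²
  have habs : ∀ d : ℝ, ‖φ d‖ ^ 2 =
      (p ^ 2 + (1 - p) ^ 2 + 2 * p * (1 - p) * Real.cos d) * Real.exp (-v * d ^ 2) := by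
    intro d
    rw [hφval d, norm_mul, mul_pow, Complex.sq_norm, Complex.sq_norm]
    have h1 : Complex.normSq (p * Complex.exp (Complex.I * d) + (1 - p))
        = p ^ 2 + (1 - p) ^ 2 + 2 * p * (1 - p) * Real.cos d := by
      rw [mul_comm Complex.I (d:ℂ)]
      rw [Complex.normSq_apply]
      simp [Complex.exp_ofReal_mul_I_re, Complex.exp_ofReal_mul_I_im]
      nlinarith [Real.sin_sq_add_cos_sq d]
    have h2 : Complex.normSq ((Real.exp (-(v * d ^ 2 / 2)) : ℝ) : ℂ)
        = Real.exp (-v * d ^ 2) := by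
      rw [Complex.normSq_ofReal, ← Real.exp_add]
      ring_nf
    rw [h1, h2]
  constructor
  · exact habs
  -- part 2
  have hcos_int : ∀ (a d : ℝ), Integrable (fun ω => Complex.exp ((↑(a + d * X ω) : ℂ) * Complex.I)) P := by
    intro a d
    have := aux_integrable_cexp P (Y := fun ω => a + d * X ω)
      (measurable_const.add (measurable_const.mul hX))
    apply this.congr
    refine Filter.Eventually.of_forall fun ω => ?_
    beta_reduce
    rw [mul_comm]
  have hkey : ∀ (d a : ℝ), (∫ ω, Real.cos (a + d * X ω) ∂P)
      = (Complex.exp ((a:ℂ) * Complex.I) * φ d).re := by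
    intro d a
    have h1 : ∀ ω, Real.cos (a + d * X ω) = (Complex.exp ((↑(a + d * X ω):ℂ) * Complex.I)).re :=
      fun ω => (Complex.exp_ofReal_mul_I_re _).symm
    simp_rw [h1]
    have h2 : ∫ ω, (Complex.exp ((↑(a + d * X ω):ℂ) * Complex.I)).re ∂P
        = (∫ ω, Complex.exp ((↑(a + d * X ω):ℂ) * Complex.I) ∂P).re := by
      rw [← RCLike.re_eq_complex_re, ← integral_re (hcos_int a d)]
    rw [h2]
    congr 1
    have h3 : ∀ ω, Complex.exp ((↑(a + d * X ω):ℂ) * Complex.I)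
        = Complex.exp ((a:ℂ) * Complex.I) * Complex.exp (Complex.I * ((d:ℂ) * (X ω : ℂ))) := by
      intro ω
      rw [← Complex.exp_add]
      push_cast
      ring_nf
    simp_rw [h3]
    rw [integral_const_mul, hφ d]
  have hsup : ∀ d : ℝ, (⨆ a : ℝ, ∫ ω, Real.cos (a + d * X ω) ∂P) = ‖φ d‖ := by
    intro d
    have hub : ∀ a : ℝ, (∫ ω, Real.cos (a + d * X ω) ∂P) ≤ ‖φ d‖ := by
      intro a
      rw [hkey d a]
      calc (Complex.exp ((a:ℂ) * Complex.I) * φ d).re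
          ≤ ‖Complex.exp ((a:ℂ) * Complex.I) * φ d‖ := Complex.re_le_norm _
        _ = ‖φ d‖ := by rw [norm_mul, Complex.norm_exp_ofReal_mul_I, one_mul]
    apply le_antisymm
    · exact ciSup_le hub
    · have hbdd : BddAbove (range fun a : ℝ => ∫ ω, Real.cos (a + d * X ω) ∂P) := by
        refine ⟨‖φ d‖, ?_⟩
        rintro _ ⟨a, rfl⟩
        exact hub a
      have hval : (∫ ω, Real.cos (-(Complex.arg (φ d)) + d * X ω) ∂P) = ‖φ d‖ := by
        rw [hkey d (-(Complex.arg (φ d)))]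
        have hz : Complex.exp ((↑(-(Complex.arg (φ d))) : ℂ) * Complex.I) * φ d
            = ((‖φ d‖ : ℝ) : ℂ) := by
          rw [show ((↑(-(Complex.arg (φ d))) : ℂ)) = -((Complex.arg (φ d) : ℝ) : ℂ) by push_cast; ring,
            neg_mul, Complex.exp_neg,
            inv_mul_eq_iff_eq_mul₀ (Complex.exp_ne_zero _), mul_comm,
            Complex.norm_mul_exp_arg_mul_I]
        rw [hz, Complex.ofReal_re]
      calc ‖φ d‖ = _ := hval.symm
        _ ≤ ⨆ a : ℝ, ∫ ω, Real.cos (a + d * X ω) ∂P := le_ciSup hbdd _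
  -- replace sup function by sqrt of g
  set g : ℝ → ℝ := fun d => (p ^ 2 + (1 - p) ^ 2 + 2 * p * (1 - p) * Real.cos d)
    * Real.exp (-v * d ^ 2) with hgdef
  have hg0 : ∀ d, 0 ≤ g d := by
    intro d
    have h1 : 0 ≤ p ^ 2 + (1 - p) ^ 2 + 2 * p * (1 - p) * Real.cos d := by
      nlinarith [Real.neg_one_le_cos d, Real.cos_le_one d, sq_nonneg (2 * p - 1),
        mul_nonneg hp0 (sub_nonneg.mpr hp1)]
    positivity
  have hfun : (fun d : ℝ => ⨆ a : ℝ, ∫ ω, Real.cos (a + d * X ω) ∂P)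
      = fun d : ℝ => Real.sqrt (g d) := by
    funext d
    rw [hsup d, ← Real.sqrt_sq (norm_nonneg (φ d)), habs d]
  rw [hfun]
  -- antitone of sqrt g iff antitone of g
  have hiff1 : AntitoneOn (fun d : ℝ => Real.sqrt (g d)) (Ioi 0) ↔ AntitoneOn g (Ioi 0) := by
    constructor
    · intro h x hx y hy hxy
      have h1 := h hx hy hxy
      calc g y = Real.sqrt (g y) ^ 2 := (Real.sq_sqrt (hg0 y)).symm
        _ ≤ Real.sqrt (g x) ^ 2 := by gcongr
        _ = g x := Real.sq_sqrt (hg0 x)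
    · intro h x hx y hy hxy
      exact Real.sqrt_le_sqrt (h hx hy hxy)
  rw [hiff1]
  -- derivative of g
  have hderiv : ∀ x : ℝ, HasDerivAt g
      (-2 * Real.exp (-v * x ^ 2) *
        (v * x * (p ^ 2 + (1 - p) ^ 2 + 2 * p * (1 - p) * Real.cos x)
          + p * (1 - p) * Real.sin x)) x := by
    intro x
    have h1 : HasDerivAt (fun y : ℝ => p ^ 2 + (1 - p) ^ 2 + 2 * p * (1 - p) * Real.cos y)
        (2 * p * (1 - p) * (-Real.sin x)) x :=
      ((Real.hasDerivAt_cos x).const_mul (2 * p * (1 - p))).const_add (p ^ 2 + (1 - p) ^ 2)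
    have h2 : HasDerivAt (fun y : ℝ => Real.exp (-v * y ^ 2))
        (Real.exp (-v * x ^ 2) * (-v * (2 * x))) x := by
      have h3 : HasDerivAt (fun y : ℝ => -v * y ^ 2) (-v * (2 * x)) x := by
        have := (hasDerivAt_pow 2 x).const_mul (-v)
        simpa using this
      exact h3.exp
    have := h1.mul h2
    exact this.congr_deriv (by ring)
  constructor
  · -- antitone → condition
    intro h d hd
    rcases eq_or_lt_of_le hd with rfl | hd'
    · simp
    · have hle := aux_antitoneOn_deriv_nonpos h hd' (hderiv d)
      nlinarith [Real.exp_pos (-v * d ^ 2)]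
  · -- condition → antitone
    intro h
    apply antitoneOn_of_deriv_nonpos (convex_Ioi 0)
    · apply Continuous.continuousOn
      rw [hgdef]
      fun_prop
    · intro x _
      exact (hderiv x).differentiableAt.differentiableWithinAt
    · intro x hx
      rw [interior_Ioi] at hx
      rw [(hderiv x).deriv]
      have := h x (le_of_lt hx)
      nlinarith [Real.exp_pos (-v * x ^ 2)]
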